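/- Let X be a topological space with base point x₀ and let X₁,…,X_n be pointed spaces with X = X₁ × ⋯ × X_n. For 0 ≤ j ≤ n let S_j ⊆ X be the subset of tuples having at least j coordinates equal to the base point. Then S_n ⊆ S_{n−1} ⊆ ⋯ ⊆ S₀ = X is a filtration by closed subsets (when each base point is closed), S_n is the single point (x₀,…,x₀), and for each 1 ≤ r ≤ n the quotient S_{n−r}/S_{n−r+1} is homeomorphic to the wedge over all subsets 𝔪 = {m₁ < ⋯ < m_r} ⊆ {1,…,n} of the smash-type quotients (X_{m₁} × ⋯ × X_{m_r}) / S₁(𝔪), where S₁(𝔪) is the subset of tuples with at least one coordinate equal to the base point. -/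

import Mathlib

/-- The relation collapsing a subset `B` of `Z` to a single point. -/
def collapseRel {Z : Type*} (B : Set Z) : Z → Z → Prop :=
  fun a b => a = b ∨ (a ∈ B ∧ b ∈ B)

/-- The quotient space `Z/B` obtained by collapsing `B ⊆ Z` to a point. -/
def Collapse {Z : Type*} (B : Set Z) : Type _ := Quot (collapseRel B)

instance {Z : Type*} [TopologicalSpace Z] (B : Set Z) : TopologicalSpace (Collapse B) :=
  inferInstanceAs (TopologicalSpace (Quot (collapseRel B)))

namespace FatWedgeAux

variable {n : ℕ} {X : Fin n → Type*}

/-- The filtration stage. -/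
abbrev Sset (x₀ : ∀ i, X i) (j : ℕ) : Set (∀ i, X i) :=
  {x | j ≤ Nat.card {i : Fin n // x i = x₀ i}}

open Classical in
/-- The finset of coordinates where `x` is NOT the base point. -/
noncomputable def nonbase (x₀ x : ∀ i, X i) : Finset (Fin n) :=
  Finset.univ.filter (fun i => ¬ x i = x₀ i)

lemma mem_nonbase {x₀ x : ∀ i, X i} {i : Fin n} :
    i ∈ nonbase x₀ x ↔ ¬ x i = x₀ i := by
  classical
  simp [nonbase]

lemma card_base (x₀ x : ∀ i, X i) :
    Nat.card {i : Fin n // x i = x₀ i} = ((nonbase x₀ x)ᶜ).card := by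
  classical
  rw [← Fintype.card_coe, ← Nat.card_eq_fintype_card]
  refine Nat.card_congr (Equiv.subtypeEquivRight fun i => ?_)
  simp [mem_nonbase]

lemma nonbase_card_le (x₀ x : ∀ i, X i) : (nonbase x₀ x).card ≤ n := by
  simpa using Finset.card_le_univ (nonbase x₀ x)

lemma card_base_eq (x₀ x : ∀ i, X i) :
    Nat.card {i : Fin n // x i = x₀ i} = n - (nonbase x₀ x).card := by
  rw [card_base, Finset.card_compl, Fintype.card_fin]

lemma mem_Sset_iff {x₀ x : ∀ i, X i} {j : ℕ} :
    x ∈ Sset x₀ j ↔ j + (nonbase x₀ x).card ≤ n := by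
  have h1 := card_base_eq x₀ x
  have h2 := nonbase_card_le x₀ x
  constructor
  · intro h
    have h3 : j ≤ Nat.card {i : Fin n // x i = x₀ i} := h
    omega
  · intro h
    show j ≤ Nat.card {i : Fin n // x i = x₀ i}
    omega

lemma nonbase_x₀ (x₀ : ∀ i, X i) : nonbase x₀ x₀ = ∅ := by
  ext i; simp [mem_nonbase]

lemma x₀_mem_Sset (x₀ : ∀ i, X i) {j : ℕ} (hj : j ≤ n) : x₀ ∈ Sset x₀ j := by
  rw [mem_Sset_iff, nonbase_x₀]
  simpa using hj

lemma Sset_antitone (x₀ : ∀ i, X i) {j k : ℕ} (h : j ≤ k) : Sset x₀ k ⊆ Sset x₀ j :=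
  fun _ hx => le_trans h hx

lemma Sset_eq_iUnion (x₀ : ∀ i, X i) (j : ℕ) :
    Sset x₀ j = ⋃ s ∈ {s : Finset (Fin n) | s.card = j}, ⋂ i ∈ s, {x | x i = x₀ i} := by
  ext x
  simp only [Set.mem_iUnion, Set.mem_iInter, Set.mem_setOf_eq]
  constructor
  · intro hj
    have hj' : j ≤ ((nonbase x₀ x)ᶜ).card := (card_base x₀ x) ▸ hj
    obtain ⟨s, hsub, hcard⟩ := Finset.exists_subset_card_eq hj'
    refine ⟨s, hcard, fun i hi => ?_⟩
    have h := hsub hi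
    rw [Finset.mem_compl, mem_nonbase, not_not] at h
    exact h
  · rintro ⟨s, hcard, hall⟩
    have hsub : s ⊆ (nonbase x₀ x)ᶜ := by
      intro i hi
      rw [Finset.mem_compl, mem_nonbase, not_not]
      exact hall i hi
    show j ≤ Nat.card {i : Fin n // x i = x₀ i}
    rw [card_base]
    exact hcard ▸ Finset.card_le_card hsub

lemma isClosed_Sset (x₀ : ∀ i, X i) [∀ i, TopologicalSpace (X i)]
    (hc : ∀ i, IsClosed ({x₀ i} : Set (X i))) (j : ℕ) : IsClosed (Sset x₀ j) := by
  rw [Sset_eq_iUnion]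
  refine Set.Finite.isClosed_biUnion (Set.toFinite _) (fun s _ => ?_)
  refine isClosed_biInter (fun i _ => ?_)
  exact (hc i).preimage (continuous_apply i)

lemma Sset_top (x₀ : ∀ i, X i) : Sset x₀ n = {x₀} := by
  ext x
  rw [Set.mem_singleton_iff, mem_Sset_iff]
  constructor
  · intro h
    funext i
    by_contra hne
    have hi : i ∈ nonbase x₀ x := mem_nonbase.mpr hne
    have h2 : 1 ≤ (nonbase x₀ x).card := Finset.card_pos.mpr ⟨i, hi⟩
    omega
  · rintro rfl
    rw [nonbase_x₀]
    simp

section Part4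

variable [∀ i, TopologicalSpace (X i)] (x₀ : ∀ i, X i) (r : ℕ)

abbrev ZL : Type _ := {x : ∀ i, X i // x ∈ Sset x₀ (n - r)}

abbrev BL : Set (ZL x₀ r) := {y | (y : ∀ i, X i) ∈ Sset x₀ (n - r + 1)}

abbrev Am (𝔪 : Finset (Fin n)) : Set (∀ i : {i : Fin n // i ∈ 𝔪}, X i.1) :=
  {y | ∃ i : {i : Fin n // i ∈ 𝔪}, y i = x₀ i.1}

abbrev ptm (𝔪 : Finset (Fin n)) : ∀ i : {i : Fin n // i ∈ 𝔪}, X i.1 := fun i => x₀ i.1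

abbrev Idx (n r : ℕ) : Type _ := {s : Finset (Fin n) // s.card = r}

abbrev ZR : Type _ := Σ 𝔪 : Idx n r, Collapse (Am x₀ 𝔪.1)

abbrev BR : Set (ZR x₀ r) :=
  {p | p.2 = Quot.mk (collapseRel (Am x₀ p.1.1)) (ptm x₀ p.1.1)}

/-- Restriction of a tuple to coordinates in `𝔪`. -/
def restrictm (𝔪 : Finset (Fin n)) (x : ∀ i, X i) : ∀ i : {i : Fin n // i ∈ 𝔪}, X i.1 :=
  fun i => x i.1

/-- Extension of a partial tuple by base points. -/
def extendm (𝔪 : Finset (Fin n)) (y : ∀ i : {i : Fin n // i ∈ 𝔪}, X i.1) : ∀ i, X i :=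
  fun i => if h : i ∈ 𝔪 then y ⟨i, h⟩ else x₀ i

lemma restrict_extend (𝔪 : Finset (Fin n)) (y : ∀ i : {i : Fin n // i ∈ 𝔪}, X i.1) :
    restrictm 𝔪 (extendm x₀ 𝔪 y) = y := by
  funext i
  show (if h : i.1 ∈ 𝔪 then y ⟨i.1, h⟩ else x₀ i.1) = y i
  rw [dif_pos i.2]

lemma nonbase_extend_subset (𝔪 : Finset (Fin n)) (y : ∀ i : {i : Fin n // i ∈ 𝔪}, X i.1) :
    nonbase x₀ (extendm x₀ 𝔪 y) ⊆ 𝔪 := by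
  intro i hi
  rw [mem_nonbase] at hi
  by_contra hmem
  exact hi (by simp [extendm, hmem])

lemma extend_mem (𝔪 : Finset (Fin n)) (hm : 𝔪.card = r) (hrn : r ≤ n)
    (y : ∀ i : {i : Fin n // i ∈ 𝔪}, X i.1) :
    extendm x₀ 𝔪 y ∈ Sset x₀ (n - r) := by
  rw [mem_Sset_iff]
  have h1 : (nonbase x₀ (extendm x₀ 𝔪 y)).card ≤ r :=
    hm ▸ Finset.card_le_card (nonbase_extend_subset x₀ 𝔪 y)
  omega

lemma extend_mem1 (𝔪 : Finset (Fin n)) (hm : 𝔪.card = r) (hr1 : 1 ≤ r) (hrn : r ≤ n)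
    {y : ∀ i : {i : Fin n // i ∈ 𝔪}, X i.1} (hy : y ∈ Am x₀ 𝔪) :
    extendm x₀ 𝔪 y ∈ Sset x₀ (n - r + 1) := by
  obtain ⟨i₀, hi₀⟩ := hy
  rw [mem_Sset_iff]
  have hsub : nonbase x₀ (extendm x₀ 𝔪 y) ⊆ 𝔪.erase i₀.1 := by
    intro i hi
    refine Finset.mem_erase.mpr ⟨?_, nonbase_extend_subset x₀ 𝔪 y hi⟩
    rintro rfl
    apply mem_nonbase.mp hi
    show (if h : (i₀ : Fin n) ∈ 𝔪 then y ⟨(i₀ : Fin n), h⟩ else x₀ i₀) = x₀ (i₀ : Fin n)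
    rw [dif_pos i₀.2]
    exact hi₀
  have h1 : (nonbase x₀ (extendm x₀ 𝔪 y)).card ≤ r - 1 := by
    have := Finset.card_le_card hsub
    rwa [Finset.card_erase_of_mem i₀.2, hm] at this
  omega

lemma nonbase_card_of_not_mem {x : ∀ i, X i} (hrn : r ≤ n)
    (hx : x ∈ Sset x₀ (n - r)) (hx1 : x ∉ Sset x₀ (n - r + 1)) :
    (nonbase x₀ x).card = r := by
  rw [mem_Sset_iff] at hx hx1
  omega

lemma exists_base_of_mem1 {x : ∀ i, X i} (hrn : r ≤ n) (hx : x ∈ Sset x₀ (n - r + 1))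
    {𝔪 : Finset (Fin n)} (hm : 𝔪.card = r) : ∃ i ∈ 𝔪, x i = x₀ i := by
  by_contra hcon
  push_neg at hcon
  have hsub : 𝔪 ⊆ nonbase x₀ x := fun i hi => mem_nonbase.mpr (hcon i hi)
  have h1 := Finset.card_le_card hsub
  rw [mem_Sset_iff] at hx
  omega

lemma exists_base_of_ne {x : ∀ i, X i} (hrn : r ≤ n)
    (hx : x ∈ Sset x₀ (n - r)) (hx1 : x ∉ Sset x₀ (n - r + 1))
    {𝔪 : Finset (Fin n)} (hm : 𝔪.card = r) (hne : 𝔪 ≠ nonbase x₀ x) :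
    ∃ i ∈ 𝔪, x i = x₀ i := by
  by_contra hcon
  push_neg at hcon
  have hsub : 𝔪 ⊆ nonbase x₀ x := fun i hi => mem_nonbase.mpr (hcon i hi)
  have hcard := nonbase_card_of_not_mem x₀ r hrn hx hx1
  exact hne (Finset.eq_of_subset_of_card_le hsub (by omega))

lemma nonbase_eq_of_all_ne {x : ∀ i, X i} (hrn : r ≤ n) (hx : x ∈ Sset x₀ (n - r))
    {𝔪 : Finset (Fin n)} (hm : 𝔪.card = r) (hall : ∀ i ∈ 𝔪, ¬ x i = x₀ i) :
    x ∉ Sset x₀ (n - r + 1) ∧ nonbase x₀ x = 𝔪 := by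
  have hsub : 𝔪 ⊆ nonbase x₀ x := fun i hi => mem_nonbase.mpr (hall i hi)
  have h1 := Finset.card_le_card hsub
  rw [mem_Sset_iff] at hx
  have hcc := nonbase_card_le x₀ x
  have heq : 𝔪 = nonbase x₀ x := Finset.eq_of_subset_of_card_le hsub (by omega)
  refine ⟨?_, heq.symm⟩
  rw [mem_Sset_iff]
  omega

/-- A fixed `r`-element subset of `Fin n`. -/
noncomputable def mstar (hrn : r ≤ n) : Idx n r := by
  have h : ∃ t ⊆ (Finset.univ : Finset (Fin n)), t.card = r :=
    Finset.exists_subset_card_eq (by simpa using hrn)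
  exact ⟨h.choose, h.choose_spec.2⟩

lemma ptm_mem {𝔪 : Finset (Fin n)} (hm : 𝔪.card = r) (hr1 : 1 ≤ r) :
    ptm x₀ 𝔪 ∈ Am x₀ 𝔪 := by
  obtain ⟨i, hi⟩ := Finset.card_pos.mp (show 0 < 𝔪.card by omega)
  exact ⟨⟨i, hi⟩, rfl⟩

lemma quot_eq_pt {𝔪 : Finset (Fin n)} (hm : 𝔪.card = r) (hr1 : 1 ≤ r)
    {y : ∀ i : {i : Fin n // i ∈ 𝔪}, X i.1} (hy : y ∈ Am x₀ 𝔪) :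
    Quot.mk (collapseRel (Am x₀ 𝔪)) y = Quot.mk _ (ptm x₀ 𝔪) :=
  Quot.sound (Or.inr ⟨hy, ptm_mem x₀ r hm hr1⟩)

lemma quot_BR_eq_base (hr1 : 1 ≤ r) (hrn : r ≤ n) {𝔪 : Idx n r}
    {y : ∀ i : {i : Fin n // i ∈ 𝔪.1}, X i.1} (hy : y ∈ Am x₀ 𝔪.1) :
    Quot.mk (collapseRel (BR x₀ r)) ⟨𝔪, Quot.mk _ y⟩ =
    Quot.mk _ ⟨mstar r hrn, Quot.mk _ (ptm x₀ (mstar (n := n) r hrn).1)⟩ :=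
  Quot.sound (Or.inr ⟨quot_eq_pt x₀ r 𝔪.2 hr1 hy, rfl⟩)

open Classical in
/-- The forward map on the ambient space. -/
noncomputable def Fmap (hrn : r ≤ n) (x : ZL x₀ r) : Collapse (BR x₀ r) :=
  if h : (x : ∀ i, X i) ∈ Sset x₀ (n - r + 1) then
    Quot.mk _ ⟨mstar r hrn, Quot.mk _ (ptm x₀ (mstar (n := n) r hrn).1)⟩
  else
    Quot.mk _ ⟨⟨nonbase x₀ x.1, nonbase_card_of_not_mem x₀ r hrn x.2 h⟩,
      Quot.mk _ (restrictm (nonbase x₀ x.1) x.1)⟩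

lemma Fmap_pos (hrn : r ≤ n) {x : ZL x₀ r} (h : (x : ∀ i, X i) ∈ Sset x₀ (n - r + 1)) :
    Fmap x₀ r hrn x =
      Quot.mk _ ⟨mstar r hrn, Quot.mk _ (ptm x₀ (mstar (n := n) r hrn).1)⟩ := by
  simp only [Fmap]
  exact dif_pos h

lemma Fmap_neg (hrn : r ≤ n) {x : ZL x₀ r} (h1 : (x : ∀ i, X i) ∉ Sset x₀ (n - r + 1))
    {s : Finset (Fin n)} (hs : s.card = r) (hse : nonbase x₀ x.1 = s) :
    Fmap x₀ r hrn x = Quot.mk _ ⟨⟨s, hs⟩, Quot.mk _ (restrictm s x.1)⟩ := by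
  subst hse
  simp only [Fmap]
  exact dif_neg h1

lemma Fmap_rel (hrn : r ≤ n) :
    ∀ a b, collapseRel (BL x₀ r) a b → Fmap x₀ r hrn a = Fmap x₀ r hrn b := by
  rintro a b (rfl | ⟨ha, hb⟩)
  · rfl
  · rw [Fmap_pos x₀ r hrn ha, Fmap_pos x₀ r hrn hb]

/-- The backward map on each wedge summand. -/
noncomputable def gm (hrn : r ≤ n) (𝔪 : Idx n r)
    (y : ∀ i : {i : Fin n // i ∈ 𝔪.1}, X i.1) : Collapse (BL x₀ r) :=
  Quot.mk _ ⟨extendm x₀ 𝔪.1 y, extend_mem x₀ r 𝔪.1 𝔪.2 hrn y⟩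

lemma gm_rel (hr1 : 1 ≤ r) (hrn : r ≤ n) (𝔪 : Idx n r) :
    ∀ a b, collapseRel (Am x₀ 𝔪.1) a b → gm x₀ r hrn 𝔪 a = gm x₀ r hrn 𝔪 b := by
  rintro a b (rfl | ⟨ha, hb⟩)
  · rfl
  · exact Quot.sound (Or.inr ⟨extend_mem1 x₀ r 𝔪.1 𝔪.2 hr1 hrn ha,
      extend_mem1 x₀ r 𝔪.1 𝔪.2 hr1 hrn hb⟩)

/-- The backward map on the ambient wedge space. -/
noncomputable def Gmap (hr1 : 1 ≤ r) (hrn : r ≤ n) (p : ZR x₀ r) : Collapse (BL x₀ r) :=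
  Quot.lift (gm x₀ r hrn p.1) (gm_rel x₀ r hr1 hrn p.1) p.2

lemma extend_ptm (𝔪 : Finset (Fin n)) : extendm x₀ 𝔪 (ptm x₀ 𝔪) = x₀ := by
  funext i
  by_cases h : i ∈ 𝔪 <;> simp [extendm, h]

lemma Gmap_rel (hr1 : 1 ≤ r) (hrn : r ≤ n) :
    ∀ a b, collapseRel (BR x₀ r) a b → Gmap x₀ r hr1 hrn a = Gmap x₀ r hr1 hrn b := by
  rintro a b (rfl | ⟨ha, hb⟩)
  · rfl
  · obtain ⟨𝔪a, ca⟩ := a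
    obtain ⟨𝔪b, cb⟩ := b
    have ha' : ca = Quot.mk _ (ptm x₀ 𝔪a.1) := ha
    have hb' : cb = Quot.mk _ (ptm x₀ 𝔪b.1) := hb
    subst ha'; subst hb'
    show gm x₀ r hrn 𝔪a (ptm x₀ 𝔪a.1) = gm x₀ r hrn 𝔪b (ptm x₀ 𝔪b.1)
    simp only [gm]
    congr 1
    refine Subtype.ext ?_
    show extendm x₀ 𝔪a.1 (ptm x₀ 𝔪a.1) = extendm x₀ 𝔪b.1 (ptm x₀ 𝔪b.1)
    rw [extend_ptm, extend_ptm]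

/-- The equivalence underlying the homeomorphism. -/
noncomputable def theEquiv (hr1 : 1 ≤ r) (hrn : r ≤ n) :
    Collapse (BL x₀ r) ≃ Collapse (BR x₀ r) where
  toFun := Quot.lift (Fmap x₀ r hrn) (Fmap_rel x₀ r hrn)
  invFun := Quot.lift (Gmap x₀ r hr1 hrn) (Gmap_rel x₀ r hr1 hrn)
  left_inv := by
    apply Quot.ind
    intro x
    show Quot.lift (Gmap x₀ r hr1 hrn) (Gmap_rel x₀ r hr1 hrn) (Fmap x₀ r hrn x) =
      Quot.mk _ x
    by_cases h : (x : ∀ i, X i) ∈ Sset x₀ (n - r + 1)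
    · rw [Fmap_pos x₀ r hrn h]
      show Quot.mk _ ⟨extendm x₀ (mstar (n := n) r hrn).1 (ptm x₀ _), _⟩ = Quot.mk _ x
      refine Quot.sound (Or.inr ⟨?_, h⟩)
      show extendm x₀ (mstar (n := n) r hrn).1 (ptm x₀ _) ∈ Sset x₀ (n - r + 1)
      rw [extend_ptm]
      exact x₀_mem_Sset x₀ (by omega)
    · have hc := nonbase_card_of_not_mem x₀ r hrn x.2 h
      rw [Fmap_neg x₀ r hrn h hc rfl]
      show Quot.mk _ ⟨extendm x₀ (nonbase x₀ x.1) (restrictm (nonbase x₀ x.1) x.1), _⟩ =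
        Quot.mk _ x
      refine congrArg (Quot.mk _) (Subtype.ext ?_)
      funext i
      show (if hh : i ∈ nonbase x₀ x.1 then x.1 i else x₀ i) = x.1 i
      by_cases hh : i ∈ nonbase x₀ x.1
      · rw [dif_pos hh]
      · rw [dif_neg hh]
        exact (not_not.mp (fun hcon => hh (mem_nonbase.mpr hcon))).symm
  right_inv := by
    apply Quot.ind
    rintro ⟨𝔪, c⟩
    induction c using Quot.ind with
    | mk y =>
      show Quot.lift (Fmap x₀ r hrn) (Fmap_rel x₀ r hrn)
        (Gmap x₀ r hr1 hrn ⟨𝔪, Quot.mk _ y⟩) = Quot.mk _ ⟨𝔪, Quot.mk _ y⟩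
      by_cases h : extendm x₀ 𝔪.1 y ∈ Sset x₀ (n - r + 1)
      · have hy : y ∈ Am x₀ 𝔪.1 := by
          obtain ⟨i, hi, hxi⟩ := exists_base_of_mem1 x₀ r hrn h 𝔪.2
          refine ⟨⟨i, hi⟩, ?_⟩
          have he : extendm x₀ 𝔪.1 y i = y ⟨i, hi⟩ := dif_pos hi
          rw [← he]; exact hxi
        show Fmap x₀ r hrn ⟨extendm x₀ 𝔪.1 y, extend_mem x₀ r 𝔪.1 𝔪.2 hrn y⟩ =
          Quot.mk _ ⟨𝔪, Quot.mk _ y⟩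
        rw [Fmap_pos x₀ r hrn h]
        exact (quot_BR_eq_base x₀ r hr1 hrn hy).symm
      · have hcard := nonbase_card_of_not_mem x₀ r hrn
          (extend_mem x₀ r 𝔪.1 𝔪.2 hrn y) h
        have heq : nonbase x₀ (extendm x₀ 𝔪.1 y) = 𝔪.1 :=
          Finset.eq_of_subset_of_card_le (nonbase_extend_subset x₀ 𝔪.1 y)
            (by rw [hcard, 𝔪.2])
        show Fmap x₀ r hrn ⟨extendm x₀ 𝔪.1 y, extend_mem x₀ r 𝔪.1 𝔪.2 hrn y⟩ =
          Quot.mk _ ⟨𝔪, Quot.mk _ y⟩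
        rw [Fmap_neg x₀ r hrn h 𝔪.2 heq, restrict_extend]

lemma continuous_restrictm (𝔪 : Finset (Fin n)) :
    Continuous (fun x : ZL x₀ r => restrictm 𝔪 x.1) :=
  continuous_pi fun i => (continuous_apply i.1).comp continuous_subtype_val

lemma continuous_Fmap (hr1 : 1 ≤ r) (hrn : r ≤ n) : Continuous (Fmap x₀ r hrn) := by
  rw [continuous_def]
  intro V hV
  have hW : ∀ 𝔪 : Idx n r,
      IsOpen {y : ∀ i : {i : Fin n // i ∈ 𝔪.1}, X i.1 |
        Quot.mk (collapseRel (BR x₀ r)) ⟨𝔪, Quot.mk _ y⟩ ∈ V} := by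
    intro 𝔪
    have h1 : IsOpen (Quot.mk (collapseRel (BR x₀ r)) ⁻¹' V) :=
      hV.preimage continuous_quot_mk
    have h2 := h1.preimage (continuous_sigmaMk (i := 𝔪))
    exact h2.preimage continuous_quot_mk
  by_cases hb : Quot.mk (collapseRel (BR x₀ r))
      ⟨mstar r hrn, Quot.mk _ (ptm x₀ (mstar (n := n) r hrn).1)⟩ ∈ V
  · have he : Fmap x₀ r hrn ⁻¹' V = ⋂ 𝔪 : Idx n r,
        (fun x : ZL x₀ r => restrictm 𝔪.1 x.1) ⁻¹'
          {y | Quot.mk (collapseRel (BR x₀ r)) ⟨𝔪, Quot.mk _ y⟩ ∈ V} := by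
      ext x
      simp only [Set.mem_preimage, Set.mem_iInter, Set.mem_setOf_eq]
      constructor
      · intro hx 𝔪
        by_cases h : (x : ∀ i, X i) ∈ Sset x₀ (n - r + 1)
        · obtain ⟨i, hi, hxi⟩ := exists_base_of_mem1 x₀ r hrn h 𝔪.2
          have hy : restrictm 𝔪.1 x.1 ∈ Am x₀ 𝔪.1 := ⟨⟨i, hi⟩, hxi⟩
          rw [quot_BR_eq_base x₀ r hr1 hrn hy]
          exact hb
        · by_cases h2 : 𝔪.1 = nonbase x₀ x.1
          · rw [Fmap_neg x₀ r hrn h 𝔪.2 h2.symm] at hx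
            exact hx
          · obtain ⟨i, hi, hxi⟩ := exists_base_of_ne x₀ r hrn x.2 h 𝔪.2 h2
            have hy : restrictm 𝔪.1 x.1 ∈ Am x₀ 𝔪.1 := ⟨⟨i, hi⟩, hxi⟩
            rw [quot_BR_eq_base x₀ r hr1 hrn hy]
            exact hb
      · intro hall
        by_cases h : (x : ∀ i, X i) ∈ Sset x₀ (n - r + 1)
        · rw [Fmap_pos x₀ r hrn h]; exact hb
        · have hc := nonbase_card_of_not_mem x₀ r hrn x.2 h
          rw [Fmap_neg x₀ r hrn h hc rfl]
          exact hall ⟨nonbase x₀ x.1, hc⟩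
    rw [he]
    exact isOpen_iInter_of_finite fun 𝔪 =>
      (hW 𝔪).preimage (continuous_restrictm x₀ r 𝔪.1)
  · have he : Fmap x₀ r hrn ⁻¹' V = ⋃ 𝔪 : Idx n r,
        (fun x : ZL x₀ r => restrictm 𝔪.1 x.1) ⁻¹'
          {y | Quot.mk (collapseRel (BR x₀ r)) ⟨𝔪, Quot.mk _ y⟩ ∈ V} := by
      ext x
      simp only [Set.mem_preimage, Set.mem_iUnion, Set.mem_setOf_eq]
      constructor
      · intro hx
        by_cases h : (x : ∀ i, X i) ∈ Sset x₀ (n - r + 1)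
        · rw [Fmap_pos x₀ r hrn h] at hx
          exact absurd hx hb
        · have hc := nonbase_card_of_not_mem x₀ r hrn x.2 h
          refine ⟨⟨nonbase x₀ x.1, hc⟩, ?_⟩
          rw [Fmap_neg x₀ r hrn h hc rfl] at hx
          exact hx
      · rintro ⟨𝔪, h𝔪⟩
        have hna : ∀ i ∈ 𝔪.1, ¬ x.1 i = x₀ i := by
          intro i hi hxi
          have hy : restrictm 𝔪.1 x.1 ∈ Am x₀ 𝔪.1 := ⟨⟨i, hi⟩, hxi⟩
          rw [quot_BR_eq_base x₀ r hr1 hrn hy] at h𝔪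
          exact hb h𝔪
        obtain ⟨h1, h2⟩ := nonbase_eq_of_all_ne x₀ r hrn x.2 𝔪.2 hna
        rw [Fmap_neg x₀ r hrn h1 𝔪.2 h2]
        exact h𝔪
    rw [he]
    exact isOpen_iUnion fun 𝔪 =>
      (hW 𝔪).preimage (continuous_restrictm x₀ r 𝔪.1)

lemma continuous_extendm (𝔪 : Finset (Fin n)) :
    Continuous (fun y : (∀ i : {i : Fin n // i ∈ 𝔪}, X i.1) => extendm x₀ 𝔪 y) := by
  refine continuous_pi fun i => ?_
  by_cases h : i ∈ 𝔪
  · simp only [extendm, dif_pos h]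
    exact continuous_apply _
  · simp only [extendm, dif_neg h]
    exact continuous_const

lemma continuous_Gmap (hr1 : 1 ≤ r) (hrn : r ≤ n) : Continuous (Gmap x₀ r hr1 hrn) := by
  apply continuous_sigma
  intro 𝔪
  show Continuous fun c => Quot.lift (gm x₀ r hrn 𝔪) (gm_rel x₀ r hr1 hrn 𝔪) c
  refine continuous_quot_lift _ ?_
  exact continuous_quot_mk.comp (Continuous.subtype_mk (continuous_extendm x₀ 𝔪.1) _)

theorem part4 (hr1 : 1 ≤ r) (hrn : r ≤ n) :
    Nonempty (Collapse (BL x₀ r) ≃ₜ Collapse (BR x₀ r)) :=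
  ⟨{ toEquiv := theEquiv x₀ r hr1 hrn
     continuous_toFun := continuous_quot_lift _ (continuous_Fmap x₀ r hr1 hrn)
     continuous_invFun := continuous_quot_lift _ (continuous_Gmap x₀ r hr1 hrn) }⟩

end Part4

end FatWedgeAux

/-- The fat wedge filtration of a finite product of pointed spaces: with
`S j = {x : at least j coordinates of x are the base point}`, the filtration is
decreasing, consists of closed subsets when the base points are closed, has top stage
the base point, and the successive quotients `S_{n-r}/S_{n-r+1}` are homeomorphic to
the wedge, over all `r`-element subsets `𝔪 ⊆ {1,…,n}`, of the quotients
`(∏_{i ∈ 𝔪} X_i)/S₁(𝔪)`. -/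
theorem fat_wedge_filtration
    (n : ℕ) (X : Fin n → Type*) [∀ i, TopologicalSpace (X i)] (x₀ : ∀ i, X i)
    (S : ℕ → Set (∀ i, X i))
    (hSdef : ∀ j, S j = {x | j ≤ Nat.card {i : Fin n // x i = x₀ i}}) :
    (∀ j k, j ≤ k → S k ⊆ S j) ∧
    ((∀ i, IsClosed ({x₀ i} : Set (X i))) → ∀ j, IsClosed (S j)) ∧
    (S n = {x₀}) ∧
    (∀ r, 1 ≤ r → r ≤ n →
      Nonempty (
        Collapse {y : {x : ∀ i, X i // x ∈ S (n - r)} |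
            (y : ∀ i, X i) ∈ S (n - r + 1)} ≃ₜ
        Collapse {p : Σ 𝔪 : {s : Finset (Fin n) // s.card = r},
            Collapse {y : (∀ i : {i : Fin n // i ∈ 𝔪.1}, X i.1) |
              ∃ i : {i : Fin n // i ∈ 𝔪.1}, y i = x₀ i.1} |
            p.2 = Quot.mk
              (collapseRel {y : (∀ i : {i : Fin n // i ∈ p.1.1}, X i.1) |
                ∃ i : {i : Fin n // i ∈ p.1.1}, y i = x₀ i.1})
              (fun i => x₀ i.1)})) := by
  have hS : S = fun j => {x | j ≤ Nat.card {i : Fin n // x i = x₀ i}} := funext hSdef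
  subst hS
  exact ⟨fun j k h => FatWedgeAux.Sset_antitone x₀ h,
         fun hc j => FatWedgeAux.isClosed_Sset x₀ hc j,
         FatWedgeAux.Sset_top x₀,
         fun r hr1 hrn => FatWedgeAux.part4 x₀ r hr1 hrn⟩
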